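/- Let α = (α_1,…,α_m) be a positional scoring vector, let ≻ be a preference over a finite set A of m alternatives, let a,c ∈ A be distinct, and let δ ≥ 0 be an integer. Then the maximum of s_α(≻',a) − s_α(≻',c) over all preferences ≻' with d_KT(≻,≻') ≤ δ equals the maximum, over j ∈ {0,1,…,δ}, of s_α(≻_j,a) − s_α(≻_j,c), where ≻_j := LS(RS(≻,c,j), a, δ − j) is the preference obtained from ≻ by first moving c down by (at most) j positions and then moving a up by (at most) δ − j positions. -/

import Mathlib

open Finset

abbrev Pref (A : Type*) [Fintype A] := A ≃ Fin (Fintype.card A)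

def prefers {A : Type*} [Fintype A] (p : Pref A) (x y : A) : Prop := p x < p y

instance {A : Type*} [Fintype A] (p : Pref A) (x y : A) : Decidable (prefers p x y) := by
  unfold prefers; infer_instance

def rank {A : Type*} [Fintype A] (p : Pref A) (a : A) : ℕ := (p a : ℕ) + 1

def dKT {A : Type*} [Fintype A] (p q : Pref A) : ℕ :=
  (univ.filter (fun z : A × A => prefers p z.1 z.2 ∧ prefers q z.2 z.1)).card

def margin {A : Type*} [Fintype A] {n : ℕ} (P : Fin n → Pref A) (x y : A) : ℤ :=
  ((univ.filter (fun i => prefers (P i) x y)).card : ℤ) -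
  ((univ.filter (fun i => prefers (P i) y x)).card : ℤ)

def Sk {A : Type*} [Fintype A] {n : ℕ} (k : ℕ) (P : Fin n → Pref A) (a : A) : ℕ :=
  (univ.filter (fun i => ((P i) a : ℕ) < k)).card

noncomputable def buckLevel {A : Type*} [Fintype A] {n : ℕ} (P : Fin n → Pref A) : ℕ :=
  sInf {k : ℕ | ∃ a : A, n < 2 * Sk k P a}

def movePerm : {m : ℕ} → Fin m → Fin m → Equiv.Perm (Fin m)
  | 0, i, _ => i.elim0
  | _ + 1, i, j => (finSuccEquiv' i).trans (finSuccEquiv' j).symm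

def RS {A : Type*} [Fintype A] (p : Pref A) (a : A) (k : ℕ) : Pref A :=
  p.trans (movePerm (p a) ⟨min ((p a : ℕ) + k) (Fintype.card A - 1),
    lt_of_le_of_lt (min_le_right _ _) (Nat.sub_lt (Fin.pos (p a)) one_pos)⟩)

def LS {A : Type*} [Fintype A] (p : Pref A) (a : A) (k : ℕ) : Pref A :=
  p.trans (movePerm (p a) ⟨(p a : ℕ) - k,
    lt_of_le_of_lt (Nat.sub_le _ _) (p a).isLt⟩)

def feasSet {A : Type*} [Fintype A] [DecidableEq A] (p : Pref A) (δ : ℕ) : Finset (Pref A) :=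
  univ.filter (fun q => dKT p q ≤ δ)

lemma dKT_self {A : Type*} [Fintype A] (p : Pref A) : dKT p p = 0 := by
  rw [dKT, Finset.card_eq_zero, Finset.filter_eq_empty_iff]
  rintro z -
  rintro ⟨h1, h2⟩
  exact absurd ((show p z.1 < p z.2 from h1).trans h2) (lt_irrefl _)

lemma feasSet_nonempty {A : Type*} [Fintype A] [DecidableEq A] (p : Pref A) (δ : ℕ) :
    (feasSet p δ).Nonempty :=
  ⟨p, by simp [feasSet, dKT_self]⟩

lemma movePerm_apply {M : ℕ} (i j x : Fin M) :
    ((movePerm i j x : Fin M) : ℕ) =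
      if (x : ℕ) = (i : ℕ) then (j : ℕ)
      else if (x : ℕ) < (i : ℕ) then (if (x : ℕ) < (j : ℕ) then (x : ℕ) else (x : ℕ) + 1)
      else (if (x : ℕ) ≤ (j : ℕ) then (x : ℕ) - 1 else (x : ℕ)) := by
  match M with
  | 0 => exact i.elim0
  | n + 1 =>
    by_cases hx : x = i
    · subst hx; simp [movePerm]
    · have hxv : (x : ℕ) ≠ (i : ℕ) := fun h => hx (Fin.val_injective h)
      obtain ⟨l, hl⟩ := Fin.exists_succAbove_eq hx
      have h1 : movePerm i j x = j.succAbove l := by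
        simp [movePerm, ← hl]
      have hval : ∀ k : Fin (n + 1), ((k.succAbove l : Fin (n+1)) : ℕ) =
          if (l : ℕ) < (k : ℕ) then (l : ℕ) else (l : ℕ) + 1 := by
        intro k
        by_cases h : l.castSucc < k
        · rw [Fin.succAbove_of_castSucc_lt _ _ h, if_pos (by simpa [Fin.lt_def] using h)]
          simp
        · rw [Fin.succAbove_of_le_castSucc _ _ (le_of_not_gt h),
            if_neg (by simpa [Fin.lt_def] using h)]
          simp
      have hx2 : (x : ℕ) = if (l : ℕ) < (i : ℕ) then (l : ℕ) else (l : ℕ) + 1 := by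
        rw [← hl]; exact hval i
      rw [h1, hval j]
      split_ifs at hx2 ⊢ <;> omega
section Lemmas
variable {A : Type*} [Fintype A]

lemma dKT_triangle [DecidableEq A] (p q r : Pref A) : dKT p r ≤ dKT p q + dKT q r := by
  refine le_trans (Finset.card_le_card ?_) (Finset.card_union_le _ _)
  intro z hz
  simp only [Finset.mem_filter, Finset.mem_univ, true_and, Finset.mem_union] at hz ⊢
  obtain ⟨h1, h2⟩ := hz
  by_cases hq : prefers q z.1 z.2
  · exact Or.inr ⟨hq, h2⟩
  · have hne : q z.1 ≠ q z.2 := fun hh => absurd (q.injective hh ▸ h1) (lt_irrefl _)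
    exact Or.inl ⟨h1, lt_of_le_of_ne (not_lt.mp hq) (Ne.symm hne)⟩

lemma dKT_trans_movePerm (p : Pref A) (i j : Fin (Fintype.card A)) :
    dKT p (p.trans (movePerm i j)) ≤ ((j : ℕ) - (i : ℕ)) + ((i : ℕ) - (j : ℕ)) := by
  have hmem : ∀ z : A × A,
      z ∈ univ.filter (fun z : A × A => prefers p z.1 z.2 ∧
        prefers (p.trans (movePerm i j)) z.2 z.1) →
      ((p z.1 : ℕ) < (p z.2 : ℕ) ∧
        (((i:ℕ) ≤ j ∧ (p z.1 : ℕ) = i ∧ (i:ℕ) < p z.2 ∧ (p z.2 : ℕ) ≤ j) ∨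
         ((j:ℕ) < i ∧ (p z.2 : ℕ) = i ∧ (j:ℕ) ≤ p z.1 ∧ (p z.1 : ℕ) < i))) := by
    intro z hz
    simp only [Finset.mem_filter, Finset.mem_univ, true_and, prefers, Equiv.trans_apply,
      Fin.lt_def] at hz
    obtain ⟨h1, h2⟩ := hz
    have e1 := movePerm_apply i j (p z.1)
    have e2 := movePerm_apply i j (p z.2)
    refine ⟨h1, ?_⟩
    split_ifs at e1 e2 <;> omega
  rcases le_or_gt (i : ℕ) (j : ℕ) with hij | hij
  · calc dKT p (p.trans (movePerm i j)) ≤ (Finset.Ioc (i:ℕ) (j:ℕ)).card := by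
          apply Finset.card_le_card_of_injOn (fun z => (p z.2 : ℕ))
          · intro z hz
            obtain ⟨-, h⟩ := hmem z hz
            simp only [Finset.mem_coe, Finset.mem_Ioc]
            omega
          · intro z hz w hw hzw
            obtain ⟨-, hz'⟩ := hmem z hz
            obtain ⟨-, hw'⟩ := hmem w hw
            have h2 : z.2 = w.2 := p.injective (Fin.val_injective hzw)
            have h1 : z.1 = w.1 := p.injective (Fin.val_injective (by omega))
            exact Prod.ext h1 h2
      _ ≤ _ := by rw [Nat.card_Ioc]; omega
  · calc dKT p (p.trans (movePerm i j)) ≤ (Finset.Ico (j:ℕ) (i:ℕ)).card := by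
          apply Finset.card_le_card_of_injOn (fun z => (p z.1 : ℕ))
          · intro z hz
            obtain ⟨-, h⟩ := hmem z hz
            simp only [Finset.mem_coe, Finset.mem_Ico]
            omega
          · intro z hz w hw hzw
            obtain ⟨-, hz'⟩ := hmem z hz
            obtain ⟨-, hw'⟩ := hmem w hw
            have h1 : z.1 = w.1 := p.injective (Fin.val_injective hzw)
            have h2 : z.2 = w.2 := p.injective (Fin.val_injective (by omega))
            exact Prod.ext h1 h2
      _ ≤ _ := by rw [Nat.card_Ico]; omega

lemma dKT_RS (p : Pref A) (x : A) (k : ℕ) : dKT p (RS p x k) ≤ k := by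
  refine le_trans (dKT_trans_movePerm p (p x) _) ?_
  have := (p x).isLt
  simp only
  omega

lemma dKT_LS (p : Pref A) (x : A) (k : ℕ) : dKT p (LS p x k) ≤ k := by
  refine le_trans (dKT_trans_movePerm p (p x) _) ?_
  simp only
  omega

end Lemmas
section PosLemmas
variable {A : Type*} [Fintype A]

lemma RS_self (p : Pref A) (x : A) (k : ℕ) :
    ((RS p x k) x : ℕ) = min ((p x : ℕ) + k) (Fintype.card A - 1) := by
  show ((movePerm (p x) _ (p x) : Fin (Fintype.card A)) : ℕ) = _
  rw [movePerm_apply]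
  simp

lemma RS_other (p : Pref A) (x y : A) (h : y ≠ x) (k : ℕ) :
    ((RS p x k) y : ℕ) =
      if (p x : ℕ) < (p y : ℕ) ∧ (p y : ℕ) ≤ min ((p x : ℕ) + k) (Fintype.card A - 1)
      then (p y : ℕ) - 1 else (p y : ℕ) := by
  have hne : (p y : ℕ) ≠ (p x : ℕ) := fun hh => h (p.injective (Fin.val_injective hh))
  have hlt := (p x).isLt
  show ((movePerm (p x) _ (p y) : Fin (Fintype.card A)) : ℕ) = _
  rw [movePerm_apply]
  simp only
  split_ifs <;> omega

lemma LS_self (p : Pref A) (x : A) (k : ℕ) :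
    ((LS p x k) x : ℕ) = (p x : ℕ) - k := by
  show ((movePerm (p x) _ (p x) : Fin (Fintype.card A)) : ℕ) = _
  rw [movePerm_apply]
  simp

lemma LS_other (p : Pref A) (x y : A) (h : y ≠ x) (k : ℕ) :
    ((LS p x k) y : ℕ) =
      if (p x : ℕ) - k ≤ (p y : ℕ) ∧ (p y : ℕ) < (p x : ℕ)
      then (p y : ℕ) + 1 else (p y : ℕ) := by
  have hne : (p y : ℕ) ≠ (p x : ℕ) := fun hh => h (p.injective (Fin.val_injective hh))
  show ((movePerm (p x) _ (p y) : Fin (Fintype.card A)) : ℕ) = _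
  rw [movePerm_apply]
  simp only
  split_ifs <;> omega

end PosLemmas
section CountLemmas
variable {A : Type*} [Fintype A] [DecidableEq A]

lemma card_prefers (p : Pref A) (b : A) :
    (univ.filter fun x => prefers p x b).card = (p b : ℕ) := by
  rw [← Fin.card_Iio (p b)]
  apply Finset.card_bij' (fun x _ => p x) (fun v _ => p.symm v)
  · intro x hx
    simp only [Finset.mem_filter, Finset.mem_univ, true_and, prefers] at hx
    exact Finset.mem_Iio.mpr (Finset.mem_filter.mp hx).2
  · intro v hv
    simp only [Finset.mem_Iio] at hv
    exact Finset.mem_filter.mpr ⟨Finset.mem_univ _, show p (p.symm v) < p b by simpa using hv⟩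
  · intro x _; simp
  · intro v _; simp

lemma up_le (p q : Pref A) (a : A) :
    (p a : ℕ) - (q a : ℕ) ≤ (univ.filter fun x => prefers p x a ∧ prefers q a x).card := by
  rw [← card_prefers p a, ← card_prefers q a]
  refine le_trans (Finset.le_card_sdiff _ _) (Finset.card_le_card ?_)
  intro x hx
  simp only [Finset.mem_sdiff, Finset.mem_filter, Finset.mem_univ, true_and] at hx ⊢
  obtain ⟨h1, h2⟩ := hx
  have hxa : x ≠ a := fun hh => absurd (hh ▸ h1) (lt_irrefl _)
  have : q a ≠ q x := fun hh => hxa (q.injective hh.symm)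
  exact ⟨h1, lt_of_le_of_ne (not_lt.mp h2) this⟩

lemma down_le (p q : Pref A) (c : A) :
    (q c : ℕ) - (p c : ℕ) ≤ (univ.filter fun x => prefers p c x ∧ prefers q x c).card := by
  refine le_trans (up_le q p c) (le_of_eq ?_)
  congr 1
  ext x
  simp [and_comm]

lemma sa_le_dKT (p q : Pref A) (a : A) : (p a : ℕ) - (q a : ℕ) ≤ dKT p q := by
  refine le_trans (up_le p q a) ?_
  apply Finset.card_le_card_of_injOn (fun x => ((x, a) : A × A))
  · intro x hx
    simp only [Finset.mem_coe, Finset.mem_filter, Finset.mem_univ, true_and] at hx ⊢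
    exact hx
  · intro x _ y _ hxy
    exact (Prod.mk.injEq _ _ _ _).mp hxy |>.1

lemma tc_le_dKT (p q : Pref A) (c : A) : (q c : ℕ) - (p c : ℕ) ≤ dKT p q := by
  refine le_trans (down_le p q c) ?_
  apply Finset.card_le_card_of_injOn (fun x => ((c, x) : A × A))
  · intro x hx
    simp only [Finset.mem_coe, Finset.mem_filter, Finset.mem_univ, true_and] at hx ⊢
    exact hx
  · intro x _ y _ hxy
    exact (Prod.mk.injEq _ _ _ _).mp hxy |>.2

lemma key_bound (p q : Pref A) (a c : A) :
    ((p a : ℕ) - (q a : ℕ)) + ((q c : ℕ) - (p c : ℕ)) ≤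
      dKT p q + (if prefers p c a ∧ prefers q a c then 1 else 0) := by
  set T1 := (univ.filter fun x => prefers p x a ∧ prefers q a x).image
    (fun x => ((x, a) : A × A)) with hT1
  set T2 := (univ.filter fun x => prefers p c x ∧ prefers q x c).image
    (fun x => ((c, x) : A × A)) with hT2
  have hc1 : T1.card = (univ.filter fun x => prefers p x a ∧ prefers q a x).card :=
    Finset.card_image_of_injective _ (fun x y hxy => ((Prod.mk.injEq _ _ _ _).mp hxy).1)
  have hc2 : T2.card = (univ.filter fun x => prefers p c x ∧ prefers q x c).card :=
    Finset.card_image_of_injective _ (fun x y hxy => ((Prod.mk.injEq _ _ _ _).mp hxy).2)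
  have hsub : T1 ∪ T2 ⊆ univ.filter (fun z : A × A => prefers p z.1 z.2 ∧ prefers q z.2 z.1) := by
    intro z hz
    simp only [hT1, hT2, Finset.mem_union, Finset.mem_image, Finset.mem_filter,
      Finset.mem_univ, true_and] at hz ⊢
    rcases hz with ⟨x, hx, rfl⟩ | ⟨x, hx, rfl⟩ <;> exact hx
  have hint : (T1 ∩ T2).card ≤ (if prefers p c a ∧ prefers q a c then 1 else 0) := by
    split_ifs with hcond
    · refine le_trans (Finset.card_le_card (show T1 ∩ T2 ⊆ {((c, a) : A × A)} from ?_))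
        (le_of_eq (Finset.card_singleton _))
      intro z hz
      simp only [hT1, hT2, Finset.mem_inter, Finset.mem_image, Finset.mem_filter,
        Finset.mem_univ, true_and, Finset.mem_singleton] at hz ⊢
      obtain ⟨⟨x, _, rfl⟩, ⟨y, _, hy⟩⟩ := hz
      rw [Prod.mk.injEq] at hy
      rw [← hy.1]
    · have hempty : T1 ∩ T2 = ∅ := by
        rw [Finset.eq_empty_iff_forall_notMem]
        intro z hz
        simp only [hT1, hT2, Finset.mem_inter, Finset.mem_image, Finset.mem_filter,
          Finset.mem_univ, true_and] at hz
        obtain ⟨⟨x, hx, rfl⟩, ⟨y, hy, hxy⟩⟩ := hz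
        rw [Prod.mk.injEq] at hxy
        exact hcond (by rw [hxy.1]; exact hx)
      simp [hempty]
  calc ((p a : ℕ) - (q a : ℕ)) + ((q c : ℕ) - (p c : ℕ))
      ≤ T1.card + T2.card := add_le_add (hc1 ▸ up_le p q a) (hc2 ▸ down_le p q c)
    _ = (T1 ∪ T2).card + (T1 ∩ T2).card := (Finset.card_union_add_card_inter T1 T2).symm
    _ ≤ dKT p q + (if prefers p c a ∧ prefers q a c then 1 else 0) :=
        add_le_add (Finset.card_le_card hsub) hint

end CountLemmas
lemma exists_good_j {A : Type*} [Fintype A] [DecidableEq A] (p q : Pref A) (a c : A)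
    (hac : a ≠ c) (δ : ℕ) (hq : dKT p q ≤ δ) :
    ∃ j ≤ δ, ((LS (RS p c j) a (δ - j)) a : ℕ) ≤ (q a : ℕ) ∧
      (q c : ℕ) ≤ ((LS (RS p c j) a (δ - j)) c : ℕ) := by
  have hpa : (p a : ℕ) < Fintype.card A := (p a).isLt
  have hpc : (p c : ℕ) < Fintype.card A := (p c).isLt
  have hqa : (q a : ℕ) < Fintype.card A := (q a).isLt
  have hqc : (q c : ℕ) < Fintype.card A := (q c).isLt
  have hpac : (p a : ℕ) ≠ (p c : ℕ) := fun hh => hac (p.injective (Fin.val_injective hh))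
  have hqac : (q a : ℕ) ≠ (q c : ℕ) := fun hh => hac (q.injective (Fin.val_injective hh))
  have hs : (p a : ℕ) - (q a : ℕ) ≤ δ := le_trans (sa_le_dKT p q a) hq
  have ht : (q c : ℕ) - (p c : ℕ) ≤ δ := le_trans (tc_le_dKT p q c) hq
  have compute : ∀ j : ℕ,
      ((LS (RS p c j) a (δ - j)) a : ℕ) =
        (if (p c : ℕ) < (p a : ℕ) ∧ (p a : ℕ) ≤ min ((p c : ℕ) + j) (Fintype.card A - 1)
          then (p a : ℕ) - 1 else (p a : ℕ)) - (δ - j) ∧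
      ((LS (RS p c j) a (δ - j)) c : ℕ) =
        (if ((if (p c : ℕ) < (p a : ℕ) ∧ (p a : ℕ) ≤ min ((p c : ℕ) + j) (Fintype.card A - 1)
                then (p a : ℕ) - 1 else (p a : ℕ)) - (δ - j) ≤ min ((p c : ℕ) + j) (Fintype.card A - 1) ∧
              min ((p c : ℕ) + j) (Fintype.card A - 1) <
                (if (p c : ℕ) < (p a : ℕ) ∧ (p a : ℕ) ≤ min ((p c : ℕ) + j) (Fintype.card A - 1)
                  then (p a : ℕ) - 1 else (p a : ℕ)))
          then min ((p c : ℕ) + j) (Fintype.card A - 1) + 1 else min ((p c : ℕ) + j) (Fintype.card A - 1)) := by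
    intro j
    constructor
    · rw [LS_self, RS_other p c a hac j]
    · rw [LS_other _ a c (Ne.symm hac), RS_other p c a hac j, RS_self]
  rcases le_or_gt (((p a : ℕ) - (q a : ℕ)) + ((q c : ℕ) - (p c : ℕ))) δ with hA | hB
  · -- easy case : j = t
    refine ⟨(q c : ℕ) - (p c : ℕ), by omega, ?_, ?_⟩
    · rw [(compute _).1]; split_ifs <;> omega
    · rw [(compute _).2]; split_ifs <;> omega
  · -- tight case
    have hkey := key_bound p q a c
    by_cases hcond : prefers p c a ∧ prefers q a c
    swap
    · rw [if_neg hcond] at hkey; omega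
    rw [if_pos hcond] at hkey
    have hpca : (p c : ℕ) < (p a : ℕ) := Fin.lt_def.mp hcond.1
    have hqac' : (q a : ℕ) < (q c : ℕ) := Fin.lt_def.mp hcond.2
    have hkey' : ((p a : ℕ) - (q a : ℕ)) + ((q c : ℕ) - (p c : ℕ)) = δ + 1 := by omega
    rcases le_or_gt (p a : ℕ) (q c : ℕ) with hBa | hBb
    · refine ⟨(q c : ℕ) - (p c : ℕ), by omega, ?_, ?_⟩
      · rw [(compute _).1]; split_ifs <;> omega
      · rw [(compute _).2]; split_ifs <;> omega
    · refine ⟨(q c : ℕ) - (p c : ℕ) - 1, by omega, ?_, ?_⟩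
      · rw [(compute _).1]; split_ifs <;> omega
      · rw [(compute _).2]; split_ifs <;> omega

theorem max_score_diff_single_vote {A : Type*} [Fintype A] [DecidableEq A]
    (α : Fin (Fintype.card A) → ℕ) (hα : Antitone α)
    (p : Pref A) (a c : A) (hac : a ≠ c) (δ : ℕ) :
    IsGreatest {z : ℤ | ∃ q : Pref A, dKT p q ≤ δ ∧ z = (α (q a) : ℤ) - (α (q c) : ℤ)}
      ((Finset.range (δ + 1)).sup' (Finset.nonempty_range_iff.mpr (Nat.succ_ne_zero δ))
        (fun j => (α ((LS (RS p c j) a (δ - j)) a) : ℤ) -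
                  (α ((LS (RS p c j) a (δ - j)) c) : ℤ))) := by
  constructor
  · obtain ⟨j0, hj0mem, hj0⟩ := Finset.exists_mem_eq_sup'
      (Finset.nonempty_range_iff.mpr (Nat.succ_ne_zero δ))
      (fun j => (α ((LS (RS p c j) a (δ - j)) a) : ℤ) -
                (α ((LS (RS p c j) a (δ - j)) c) : ℤ))
    rw [Finset.mem_range] at hj0mem
    refine ⟨LS (RS p c j0) a (δ - j0), ?_, hj0⟩
    calc dKT p (LS (RS p c j0) a (δ - j0))
        ≤ dKT p (RS p c j0) + dKT (RS p c j0) (LS (RS p c j0) a (δ - j0)) :=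
          dKT_triangle _ _ _
      _ ≤ j0 + (δ - j0) := add_le_add (dKT_RS _ _ _) (dKT_LS _ _ _)
      _ ≤ δ := by omega
  · rintro z ⟨q, hq, rfl⟩
    obtain ⟨j, hjle, h1, h2⟩ := exists_good_j p q a c hac δ hq
    have u1 : α (q a) ≤ α ((LS (RS p c j) a (δ - j)) a) := hα (Fin.le_def.mpr h1)
    have u2 : α ((LS (RS p c j) a (δ - j)) c) ≤ α (q c) := hα (Fin.le_def.mpr h2)
    have hstep : (α (q a) : ℤ) - (α (q c) : ℤ) ≤
        (α ((LS (RS p c j) a (δ - j)) a) : ℤ) - (α ((LS (RS p c j) a (δ - j)) c) : ℤ) :=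
      sub_le_sub (Int.ofNat_le.mpr u1) (Int.ofNat_le.mpr u2)
    exact le_trans hstep (Finset.le_sup'
      (fun j => (α ((LS (RS p c j) a (δ - j)) a) : ℤ) - (α ((LS (RS p c j) a (δ - j)) c) : ℤ))
      (Finset.mem_range.mpr (Nat.lt_succ_of_le hjle)))
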